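/- sin(4π/13)sin(6π/13)/(sin(2π/13)sin(3π/13)) - sin(2π/13)sin(3π/13)/(sin(π/13)sin(5π/13)) - sin(5π/13)sin(π/13)/(sin(4π/13)sin(6π/13)) = 1. -/

import Mathlib

open Real

theorem stmt_12 :
    Real.sin (4 * π / 13) * Real.sin (6 * π / 13) /
      (Real.sin (2 * π / 13) * Real.sin (3 * π / 13))
      - Real.sin (2 * π / 13) * Real.sin (3 * π / 13) /
        (Real.sin (π / 13) * Real.sin (5 * π / 13))
      - Real.sin (5 * π / 13) * Real.sin (π / 13) /
        (Real.sin (4 * π / 13) * Real.sin (6 * π / 13)) = 1 := by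
  have hπ := Real.pi_pos
  have pyth : Real.sin (π / 13) ^ 2 = 1 - Real.cos (π / 13) ^ 2 := by
    have := Real.sin_sq_add_cos_sq (π / 13); linarith
  -- abbreviations only in comments: s = sin(π/13), c = cos(π/13)
  have e2 : (2 : ℝ) * π / 13 = π / 13 + π / 13 := by ring
  have hs2 : Real.sin (2 * π / 13) = 2 * Real.sin (π / 13) * Real.cos (π / 13) := by
    rw [e2, Real.sin_add]; ring
  have hc2 : Real.cos (2 * π / 13) = 2 * Real.cos (π / 13) ^ 2 - 1 := by
    rw [e2, Real.cos_add]; linear_combination -pyth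
  have e3 : (3 : ℝ) * π / 13 = 2 * π / 13 + π / 13 := by ring
  have hs3 : Real.sin (3 * π / 13) = Real.sin (π / 13) * (4 * Real.cos (π / 13) ^ 2 - 1) := by
    rw [e3, Real.sin_add, hs2, hc2]; ring
  have hc3 : Real.cos (3 * π / 13) = 4 * Real.cos (π / 13) ^ 3 - 3 * Real.cos (π / 13) := by
    rw [e3, Real.cos_add, hs2, hc2]; linear_combination (-2 * Real.cos (π / 13)) * pyth
  have e4 : (4 : ℝ) * π / 13 = 3 * π / 13 + π / 13 := by ring
  have hs4 : Real.sin (4 * π / 13) = Real.sin (π / 13) * (8 * Real.cos (π / 13) ^ 3 - 4 * Real.cos (π / 13)) := by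
    rw [e4, Real.sin_add, hs3, hc3]; ring
  have hc4 : Real.cos (4 * π / 13) = 8 * Real.cos (π / 13) ^ 4 - 8 * Real.cos (π / 13) ^ 2 + 1 := by
    rw [e4, Real.cos_add, hs3, hc3]; linear_combination (-(4 * Real.cos (π / 13) ^ 2 - 1)) * pyth
  have e5 : (5 : ℝ) * π / 13 = 4 * π / 13 + π / 13 := by ring
  have hs5 : Real.sin (5 * π / 13) = Real.sin (π / 13) * (16 * Real.cos (π / 13) ^ 4 - 12 * Real.cos (π / 13) ^ 2 + 1) := by
    rw [e5, Real.sin_add, hs4, hc4]; ring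
  have hc5 : Real.cos (5 * π / 13) = 16 * Real.cos (π / 13) ^ 5 - 20 * Real.cos (π / 13) ^ 3 + 5 * Real.cos (π / 13) := by
    rw [e5, Real.cos_add, hs4, hc4]; linear_combination (-(8 * Real.cos (π / 13) ^ 3 - 4 * Real.cos (π / 13))) * pyth
  have e6 : (6 : ℝ) * π / 13 = 5 * π / 13 + π / 13 := by ring
  have hs6 : Real.sin (6 * π / 13) = Real.sin (π / 13) * (32 * Real.cos (π / 13) ^ 5 - 32 * Real.cos (π / 13) ^ 3 + 6 * Real.cos (π / 13)) := by
    rw [e6, Real.sin_add, hs5, hc5]; ring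
  have hc6 : Real.cos (6 * π / 13) = 32 * Real.cos (π / 13) ^ 6 - 48 * Real.cos (π / 13) ^ 4 + 18 * Real.cos (π / 13) ^ 2 - 1 := by
    rw [e6, Real.cos_add, hs5, hc5]; linear_combination (-(16 * Real.cos (π / 13) ^ 4 - 12 * Real.cos (π / 13) ^ 2 + 1)) * pyth
  have e7 : (7 : ℝ) * π / 13 = 6 * π / 13 + π / 13 := by ring
  have hs7 : Real.sin (7 * π / 13) = Real.sin (π / 13) * (64 * Real.cos (π / 13) ^ 6 - 80 * Real.cos (π / 13) ^ 4 + 24 * Real.cos (π / 13) ^ 2 - 1) := by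
    rw [e7, Real.sin_add, hs6, hc6]; ring
  have e7' : (7 : ℝ) * π / 13 = π - 6 * π / 13 := by ring
  have hs7' : Real.sin (7 * π / 13) = Real.sin (6 * π / 13) := by
    rw [e7', Real.sin_pi_sub]
  -- positivity of the sines involved
  have pos : ∀ k : ℕ, 1 ≤ k → k ≤ 6 → 0 < Real.sin (k * π / 13) := by
    intro k hk1 hk6
    apply Real.sin_pos_of_pos_of_lt_pi
    · have : (1 : ℝ) ≤ k := by exact_mod_cast hk1
      nlinarith
    · have : (k : ℝ) ≤ 6 := by exact_mod_cast hk6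
      nlinarith
  have p1 : 0 < Real.sin (π / 13) := by
    have := pos 1 le_rfl (by norm_num); simpa using this
  have p2 : 0 < Real.sin (2 * π / 13) := by have := pos 2 (by norm_num) (by norm_num); simpa using this
  have p3 : 0 < Real.sin (3 * π / 13) := by have := pos 3 (by norm_num) (by norm_num); simpa using this
  have p4 : 0 < Real.sin (4 * π / 13) := by have := pos 4 (by norm_num) (by norm_num); simpa using this
  have p5 : 0 < Real.sin (5 * π / 13) := by have := pos 5 (by norm_num) (by norm_num); simpa using this
  have p6 : 0 < Real.sin (6 * π / 13) := by have := pos 6 (by norm_num) (by norm_num); simpa using this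
  -- the minimal polynomial relation for c = cos(π/13)
  have hm : 64 * Real.cos (π / 13) ^ 6 - 32 * Real.cos (π / 13) ^ 5 - 80 * Real.cos (π / 13) ^ 4
      + 32 * Real.cos (π / 13) ^ 3 + 24 * Real.cos (π / 13) ^ 2 - 6 * Real.cos (π / 13) - 1 = 0 := by
    have h := hs7.symm.trans (hs7'.trans hs6)
    have := mul_left_cancel₀ p1.ne' h
    linear_combination this
  rw [div_sub_div _ _ (mul_ne_zero p2.ne' p3.ne') (mul_ne_zero p1.ne' p5.ne'), div_sub_div _ _ (mul_ne_zero (mul_ne_zero p2.ne' p3.ne') (mul_ne_zero p1.ne' p5.ne')) (mul_ne_zero p4.ne' p6.ne'), div_eq_iff (mul_ne_zero (mul_ne_zero (mul_ne_zero p2.ne' p3.ne') (mul_ne_zero p1.ne' p5.ne')) (mul_ne_zero p4.ne' p6.ne')), one_mul]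
  rw [hs2, hs3, hs4, hs5, hs6]
  linear_combination (Real.sin (π / 13) ^ 6 *
      (-2 * Real.cos (π / 13) + 12 * Real.cos (π / 13) ^ 2 - 16 * Real.cos (π / 13) ^ 3
        - 352 * Real.cos (π / 13) ^ 4 + 608 * Real.cos (π / 13) ^ 5 + 3328 * Real.cos (π / 13) ^ 6
        - 4224 * Real.cos (π / 13) ^ 7 - 14592 * Real.cos (π / 13) ^ 8 + 12288 * Real.cos (π / 13) ^ 9
        + 32768 * Real.cos (π / 13) ^ 10 - 16384 * Real.cos (π / 13) ^ 11 - 36864 * Real.cos (π / 13) ^ 12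
        + 8192 * Real.cos (π / 13) ^ 13 + 16384 * Real.cos (π / 13) ^ 14)) * hm
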